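/- Let Λ be a discrete index set, separated by a K-admissible index distance ω with constants C_T, C_Λ, C_ω. Let A ∈ 𝓑_{N+L} with L ≥ max(2N·log_{C_Λ}(C_T), 2K), and let B ∈ 𝓑_N. Then the matrix product AB belongs to 𝓑_N, with ‖AB‖_{𝓑_N} ≤ (1 + C_ω) ‖A‖_{𝓑_{N+L}} ‖B‖_{𝓑_N}. -/

import Mathlib

/-- Submultiplicativity (Theorem 2.6): let `Λ` be separated (with constant `C_Λ > 1`) by a
`K`-admissible index distance `ω` (with constant `C_ω`), let `A ∈ 𝓑_{N+L}` with
`L ≥ max(2N·log_{C_Λ} C_T, 2K)` and `B ∈ 𝓑_N`.  Then `AB ∈ 𝓑_N` with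
`‖AB‖_{𝓑_N} ≤ (1 + C_ω) ‖A‖_{𝓑_{N+L}} ‖B‖_{𝓑_N}`.  (The norms are expressed through
arbitrary localization constants `CA, CB` bounding `A` and `B`.) -/
theorem stmt_1 {Λ : Type*} (ω : Λ → Λ → ℝ)
    (C_S C_T C_Λ C_ω K N L : ℝ)
    (hω1 : ∀ l l' : Λ, 1 ≤ ω l l')
    (hdiag : ∀ l : Λ, ω l l = 1)
    (hCS : 1 ≤ C_S) (hCT : 1 ≤ C_T)
    (hsym : ∀ l l' : Λ, ω l l' ≤ C_S * ω l' l)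
    (htri : ∀ l l' l'' : Λ, ω l l' ≤ C_T * ω l l'' * ω l'' l')
    (hCΛ : 1 < C_Λ) (hsep : ∀ l l' : Λ, l ≠ l' → C_Λ ≤ ω l l')
    (hK : 1 ≤ K)
    (hadm : ∀ l : Λ, Summable (fun l' : Λ => ω l l' ^ (-K)) ∧
      ∑' l' : Λ, ω l l' ^ (-K) ≤ C_ω)
    (hN : 1 ≤ N)
    (hL : max (2 * N * Real.logb C_Λ C_T) (2 * K) ≤ L)
    (A B : Λ → Λ → ℂ) (CA CB : ℝ)
    (hA : ∀ l l' : Λ, ‖A l l'‖ ≤ CA * ω l l' ^ (-(N + L)))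
    (hB : ∀ l l' : Λ, ‖B l l'‖ ≤ CB * ω l l' ^ (-N)) :
    ∀ l l' : Λ, Summable (fun l'' : Λ => A l l'' * B l'' l') ∧
      ‖∑' l'' : Λ, A l l'' * B l'' l'‖ ≤
        (1 + C_ω) * CA * CB * ω l l' ^ (-N) := by
  intro l l'
  have hωpos : ∀ a b : Λ, 0 < ω a b := fun a b => lt_of_lt_of_le one_pos (hω1 a b)
  have hCA : 0 ≤ CA := by
    have := hA l l
    have h0 : (0:ℝ) ≤ ‖A l l‖ := norm_nonneg _
    rw [hdiag l, Real.one_rpow] at this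
    linarith
  have hCB : 0 ≤ CB := by
    have := hB l l
    have h0 : (0:ℝ) ≤ ‖B l l‖ := norm_nonneg _
    rw [hdiag l, Real.one_rpow] at this
    linarith
  have hN0 : (0:ℝ) ≤ N := by linarith
  have hK0 : (0:ℝ) ≤ K := by linarith
  have hLK : K ≤ L - K := by
    have := le_trans (le_max_right _ _) hL
    linarith
  have hLK0 : (0:ℝ) ≤ L - K := by linarith
  have hlogL : N * Real.logb C_Λ C_T ≤ L - K := by
    have h1 := le_trans (le_max_left _ _) hL
    have h2 := le_trans (le_max_right _ _) hL
    linarith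
  -- key pointwise estimate
  have main : ∀ l'' : Λ, ω l l' ^ N * ω l l'' ^ K ≤ ω l l'' ^ (N + L) * ω l'' l' ^ N := by
    intro l''
    by_cases h : l'' = l
    · subst h
      rw [hdiag, Real.one_rpow, Real.one_rpow, mul_one, one_mul]
    · have ha : C_Λ ≤ ω l l'' := hsep l l'' (Ne.symm h)
      have hCT_le : C_T ^ N ≤ ω l l'' ^ (L - K) := by
        have h1 : C_T ^ N = C_Λ ^ (N * Real.logb C_Λ C_T) := by
          rw [mul_comm, Real.rpow_mul (le_of_lt (lt_trans one_pos hCΛ)),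
            Real.rpow_logb (lt_trans one_pos hCΛ) (ne_of_gt hCΛ) (lt_of_lt_of_le one_pos hCT)]
        rw [h1]
        calc C_Λ ^ (N * Real.logb C_Λ C_T) ≤ C_Λ ^ (L - K) :=
              Real.rpow_le_rpow_of_exponent_le (le_of_lt hCΛ) hlogL
          _ ≤ ω l l'' ^ (L - K) :=
              Real.rpow_le_rpow (le_of_lt (lt_trans one_pos hCΛ)) ha hLK0
      have htriN : ω l l' ^ N ≤ C_T ^ N * (ω l l'' ^ N * ω l'' l' ^ N) := by
        have := htri l l' l''
        calc ω l l' ^ N ≤ (C_T * ω l l'' * ω l'' l') ^ N :=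
              Real.rpow_le_rpow (le_of_lt (hωpos l l')) this hN0
          _ = C_T ^ N * (ω l l'' ^ N * ω l'' l' ^ N) := by
              rw [Real.mul_rpow (mul_nonneg (by linarith) (le_of_lt (hωpos l l'')))
                (le_of_lt (hωpos l'' l')),
                Real.mul_rpow (by linarith) (le_of_lt (hωpos l l'')), mul_assoc]
      have hstep : ω l l' ^ N * ω l l'' ^ K ≤
          ω l l'' ^ (L - K) * (ω l l'' ^ N * ω l'' l' ^ N) * ω l l'' ^ K := by
        have hKpos : (0:ℝ) < ω l l'' ^ K := Real.rpow_pos_of_pos (hωpos l l'') K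
        have h2 : ω l l' ^ N ≤ ω l l'' ^ (L - K) * (ω l l'' ^ N * ω l'' l' ^ N) := by
          refine le_trans htriN ?_
          exact mul_le_mul_of_nonneg_right hCT_le
            (mul_nonneg (le_of_lt (Real.rpow_pos_of_pos (hωpos l l'') N))
              (le_of_lt (Real.rpow_pos_of_pos (hωpos l'' l') N)))
        exact mul_le_mul_of_nonneg_right h2 (le_of_lt hKpos)
      refine le_trans hstep (le_of_eq ?_)
      rw [show ω l l'' ^ (L - K) * (ω l l'' ^ N * ω l'' l' ^ N) * ω l l'' ^ K =
          ω l l'' ^ (L - K) * ω l l'' ^ N * ω l l'' ^ K * ω l'' l' ^ N from by ring,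
        ← Real.rpow_add (hωpos l l''), ← Real.rpow_add (hωpos l l'')]
      ring_nf
  have key : ∀ l'' : Λ, ‖A l l'' * B l'' l'‖ ≤
      CA * CB * ω l l' ^ (-N) * ω l l'' ^ (-K) := by
    intro l''
    have hineq : ω l l'' ^ (-(N + L)) * ω l'' l' ^ (-N) ≤ ω l l' ^ (-N) * ω l l'' ^ (-K) := by
      rw [Real.rpow_neg (le_of_lt (hωpos l l'')), Real.rpow_neg (le_of_lt (hωpos l'' l')),
        Real.rpow_neg (le_of_lt (hωpos l l')), Real.rpow_neg (le_of_lt (hωpos l l'')),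
        ← mul_inv, ← mul_inv]
      refine inv_anti₀ ?_ ?_
      · exact mul_pos (Real.rpow_pos_of_pos (hωpos l l') N)
          (Real.rpow_pos_of_pos (hωpos l l'') K)
      · exact main l''
    calc ‖A l l'' * B l'' l'‖
        = ‖A l l''‖ * ‖B l'' l'‖ := norm_mul _ _
      _ ≤ (CA * ω l l'' ^ (-(N + L))) * (CB * ω l'' l' ^ (-N)) := by
          apply mul_le_mul (hA l l'') (hB l'' l') (norm_nonneg _)
          exact mul_nonneg hCA (le_of_lt (Real.rpow_pos_of_pos (hωpos l l'') _))
      _ = CA * CB * (ω l l'' ^ (-(N + L)) * ω l'' l' ^ (-N)) := by ring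
      _ ≤ CA * CB * (ω l l' ^ (-N) * ω l l'' ^ (-K)) := by
          exact mul_le_mul_of_nonneg_left hineq (mul_nonneg hCA hCB)
      _ = CA * CB * ω l l' ^ (-N) * ω l l'' ^ (-K) := by ring
  have hconst : (0:ℝ) ≤ CA * CB * ω l l' ^ (-N) :=
    mul_nonneg (mul_nonneg hCA hCB) (le_of_lt (Real.rpow_pos_of_pos (hωpos l l') _))
  have hsumb : Summable (fun l'' : Λ => CA * CB * ω l l' ^ (-N) * ω l l'' ^ (-K)) :=
    (hadm l).1.mul_left _
  have hnorm : Summable (fun l'' : Λ => ‖A l l'' * B l'' l'‖) := by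
    apply Summable.of_nonneg_of_le (fun _ => norm_nonneg _) (fun l'' => ?_) hsumb
    exact key l''
  have hsummable : Summable (fun l'' : Λ => A l l'' * B l'' l') := hnorm.of_norm
  refine ⟨hsummable, ?_⟩
  have h1 : ‖∑' l'' : Λ, A l l'' * B l'' l'‖ ≤
      ∑' l'' : Λ, CA * CB * ω l l' ^ (-N) * ω l l'' ^ (-K) := by
    refine le_trans (norm_tsum_le_tsum_norm hnorm) ?_
    apply Summable.tsum_le_tsum (fun l'' => ?_) hnorm hsumb
    exact key l''
  refine le_trans h1 ?_
  rw [tsum_mul_left]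
  calc CA * CB * ω l l' ^ (-N) * ∑' l'' : Λ, ω l l'' ^ (-K)
      ≤ CA * CB * ω l l' ^ (-N) * C_ω := mul_le_mul_of_nonneg_left (hadm l).2 hconst
    _ ≤ (1 + C_ω) * CA * CB * ω l l' ^ (-N) := by nlinarith
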